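/- Let A1 ∈ ℝ^{n1×n1}, B1 ∈ ℝ^{n1×m}, C1 ∈ ℝ^{m×n1}, D1 ∈ ℝ^{m×m} and A2 ∈ ℝ^{n2×n2}, B2 ∈ ℝ^{n2×m}, C2 ∈ ℝ^{m×n2}, D2 ∈ ℝ^{m×m} with D1, D2 symmetric and D1 D2 = 0. Suppose P1 ∈ ℝ^{n1×n1} and P2 ∈ ℝ^{n2×n2} are symmetric positive definite and L1, L2 are real matrices such that A1 P1^{-1} + P1^{-1} A1^T = -L1^T L1, B1 + A1 P1^{-1} C1^T = 0, A2 P2^{-1} + P2^{-1} A2^T = -L2^T L2, and B2 + A2 P2^{-1} C2^T = 0. Define the closed-loop matrix Ă = [[A1 + B1 D2 C1, B1 C2], [B2 C1, A2 + B2 D1 C2]] and Q = [[P1 - C1^T D2 C1, -C1^T C2], [-C2^T C1, P2 - C2^T D1 C2]]. Then Ă^T Q + Q Ă = -(R1^T R1 + R2^T R2), where R1 = [L1(P1 - C1^T D2 C1), -L1 C1^T C2] and R2 = [-L2 C2^T C1, L2(P2 - C2^T D1 C2)] (block row matrices). In particular, Ă^T Q + Q Ă is negative semidefinite. -/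

import Mathlib

open Matrix

theorem stmt_4 {n1 n2 m l1 l2 : ℕ}
    (A1 : Matrix (Fin n1) (Fin n1) ℝ) (B1 : Matrix (Fin n1) (Fin m) ℝ)
    (C1 : Matrix (Fin m) (Fin n1) ℝ) (D1 : Matrix (Fin m) (Fin m) ℝ)
    (A2 : Matrix (Fin n2) (Fin n2) ℝ) (B2 : Matrix (Fin n2) (Fin m) ℝ)
    (C2 : Matrix (Fin m) (Fin n2) ℝ) (D2 : Matrix (Fin m) (Fin m) ℝ)
    (P1 : Matrix (Fin n1) (Fin n1) ℝ) (P2 : Matrix (Fin n2) (Fin n2) ℝ)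
    (L1 : Matrix (Fin l1) (Fin n1) ℝ) (L2 : Matrix (Fin l2) (Fin n2) ℝ)
    (hD1symm : D1ᵀ = D1) (hD2symm : D2ᵀ = D2) (hD12 : D1 * D2 = 0)
    (hP1symm : P1ᵀ = P1)
    (hP1pd : ∀ x : Fin n1 → ℝ, x ≠ 0 → 0 < x ⬝ᵥ P1.mulVec x)
    (hP2symm : P2ᵀ = P2)
    (hP2pd : ∀ x : Fin n2 → ℝ, x ≠ 0 → 0 < x ⬝ᵥ P2.mulVec x)
    (h1a : A1 * P1⁻¹ + P1⁻¹ * A1ᵀ = -(L1ᵀ * L1))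
    (h1b : B1 + A1 * P1⁻¹ * C1ᵀ = 0)
    (h2a : A2 * P2⁻¹ + P2⁻¹ * A2ᵀ = -(L2ᵀ * L2))
    (h2b : B2 + A2 * P2⁻¹ * C2ᵀ = 0) :
    ((Matrix.fromBlocks (A1 + B1 * D2 * C1) (B1 * C2)
        (B2 * C1) (A2 + B2 * D1 * C2))ᵀ *
      (Matrix.fromBlocks (P1 - C1ᵀ * D2 * C1) (-(C1ᵀ * C2))
        (-(C2ᵀ * C1)) (P2 - C2ᵀ * D1 * C2)) +
      (Matrix.fromBlocks (P1 - C1ᵀ * D2 * C1) (-(C1ᵀ * C2))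
        (-(C2ᵀ * C1)) (P2 - C2ᵀ * D1 * C2)) *
      (Matrix.fromBlocks (A1 + B1 * D2 * C1) (B1 * C2)
        (B2 * C1) (A2 + B2 * D1 * C2)) =
      -((Matrix.fromCols (L1 * (P1 - C1ᵀ * D2 * C1)) (-(L1 * C1ᵀ * C2)))ᵀ *
          (Matrix.fromCols (L1 * (P1 - C1ᵀ * D2 * C1)) (-(L1 * C1ᵀ * C2))) +
        (Matrix.fromCols (-(L2 * C2ᵀ * C1)) (L2 * (P2 - C2ᵀ * D1 * C2)))ᵀ *
          (Matrix.fromCols (-(L2 * C2ᵀ * C1)) (L2 * (P2 - C2ᵀ * D1 * C2))))) ∧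
    (∀ x : (Fin n1 ⊕ Fin n2) → ℝ,
      x ⬝ᵥ ((Matrix.fromBlocks (A1 + B1 * D2 * C1) (B1 * C2)
          (B2 * C1) (A2 + B2 * D1 * C2))ᵀ *
        (Matrix.fromBlocks (P1 - C1ᵀ * D2 * C1) (-(C1ᵀ * C2))
          (-(C2ᵀ * C1)) (P2 - C2ᵀ * D1 * C2)) +
        (Matrix.fromBlocks (P1 - C1ᵀ * D2 * C1) (-(C1ᵀ * C2))
          (-(C2ᵀ * C1)) (P2 - C2ᵀ * D1 * C2)) *
        (Matrix.fromBlocks (A1 + B1 * D2 * C1) (B1 * C2)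
          (B2 * C1) (A2 + B2 * D1 * C2))).mulVec x ≤ 0) := by
  classical
  -- positive definiteness gives invertibility
  have hpd1 : P1.PosDef := Matrix.PosDef.of_dotProduct_mulVec_pos (by simpa [Matrix.IsHermitian] using hP1symm)
    fun x hx => by simpa using hP1pd x hx
  have hpd2 : P2.PosDef := Matrix.PosDef.of_dotProduct_mulVec_pos (by simpa [Matrix.IsHermitian] using hP2symm)
    fun x hx => by simpa using hP2pd x hx
  have hdet1 : IsUnit P1.det := (Matrix.isUnit_iff_isUnit_det _).1 hpd1.isUnit
  have hdet2 : IsUnit P2.det := (Matrix.isUnit_iff_isUnit_det _).1 hpd2.isUnit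
  have hinv1 : P1⁻¹ * P1 = 1 := Matrix.nonsing_inv_mul P1 hdet1
  have hinv2 : P2⁻¹ * P2 = 1 := Matrix.nonsing_inv_mul P2 hdet2
  have hS1symm : (P1⁻¹)ᵀ = P1⁻¹ := by rw [Matrix.transpose_nonsing_inv, hP1symm]
  have hS2symm : (P2⁻¹)ᵀ = P2⁻¹ := by rw [Matrix.transpose_nonsing_inv, hP2symm]
  set T1 := A1 * P1⁻¹ with hT1def
  set T2 := A2 * P2⁻¹ with hT2def
  set E1 := P1 - C1ᵀ * D2 * C1 with hE1def
  set E2 := P2 - C2ᵀ * D1 * C2 with hE2def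
  have hA1 : A1 = T1 * P1 := by rw [hT1def, mul_assoc, hinv1, mul_one]
  have hA2 : A2 = T2 * P2 := by rw [hT2def, mul_assoc, hinv2, mul_one]
  have hB1 : B1 = -(T1 * C1ᵀ) := by
    have h := eq_neg_of_add_eq_zero_left h1b
    rw [h, hT1def]
  have hB2 : B2 = -(T2 * C2ᵀ) := by
    have h := eq_neg_of_add_eq_zero_left h2b
    rw [h, hT2def]
  have hT1t : T1ᵀ = P1⁻¹ * A1ᵀ := by rw [hT1def, Matrix.transpose_mul, hS1symm]
  have hT2t : T2ᵀ = P2⁻¹ * A2ᵀ := by rw [hT2def, Matrix.transpose_mul, hS2symm]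
  have hL1 : T1 + T1ᵀ = -(L1ᵀ * L1) := by rw [hT1t]; exact h1a
  have hL2 : T2 + T2ᵀ = -(L2ᵀ * L2) := by rw [hT2t]; exact h2a
  -- block abbreviations
  set Q : Matrix (Fin n1 ⊕ Fin n2) (Fin n1 ⊕ Fin n2) ℝ :=
    Matrix.fromBlocks E1 (-(C1ᵀ * C2)) (-(C2ᵀ * C1)) E2 with hQdef
  set T : Matrix (Fin n1 ⊕ Fin n2) (Fin n1 ⊕ Fin n2) ℝ :=
    Matrix.fromBlocks T1 0 0 T2 with hTdef
  set L : Matrix (Fin l1 ⊕ Fin l2) (Fin n1 ⊕ Fin n2) ℝ :=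
    Matrix.fromBlocks L1 0 0 L2 with hLdef
  have hAhat : Matrix.fromBlocks (A1 + B1 * D2 * C1) (B1 * C2)
      (B2 * C1) (A2 + B2 * D1 * C2) = T * Q := by
    rw [hTdef, hQdef, Matrix.fromBlocks_multiply]
    have e11 : A1 + B1 * D2 * C1 = T1 * E1 + (0 : Matrix (Fin n1) (Fin n2) ℝ) * (-(C2ᵀ * C1)) := by
      rw [hA1, hB1, hE1def]
      simp only [Matrix.zero_mul, Matrix.mul_zero, add_zero, zero_add, Matrix.neg_mul, Matrix.mul_neg, Matrix.mul_sub, Matrix.sub_mul, Matrix.mul_assoc, sub_eq_add_neg, Matrix.mul_add, neg_zero, add_zero, zero_add]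
    have e12 : B1 * C2 = T1 * (-(C1ᵀ * C2)) + (0 : Matrix (Fin n1) (Fin n2) ℝ) * E2 := by
      rw [hB1]
      simp only [Matrix.zero_mul, Matrix.mul_zero, add_zero, zero_add, Matrix.neg_mul, Matrix.mul_neg, Matrix.mul_sub, Matrix.sub_mul, Matrix.mul_assoc, sub_eq_add_neg, Matrix.mul_add, neg_zero, add_zero, zero_add]
    have e21 : B2 * C1 = (0 : Matrix (Fin n2) (Fin n1) ℝ) * E1 + T2 * (-(C2ᵀ * C1)) := by
      rw [hB2]
      simp only [Matrix.zero_mul, Matrix.mul_zero, add_zero, zero_add, Matrix.neg_mul, Matrix.mul_neg, Matrix.mul_sub, Matrix.sub_mul, Matrix.mul_assoc, sub_eq_add_neg, Matrix.mul_add, neg_zero, add_zero, zero_add]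
    have e22 : A2 + B2 * D1 * C2 = (0 : Matrix (Fin n2) (Fin n1) ℝ) * (-(C1ᵀ * C2)) + T2 * E2 := by
      rw [hA2, hB2, hE2def]
      simp only [Matrix.zero_mul, Matrix.mul_zero, add_zero, zero_add, Matrix.neg_mul, Matrix.mul_neg, Matrix.mul_sub, Matrix.sub_mul, Matrix.mul_assoc, sub_eq_add_neg, Matrix.mul_add, neg_zero, add_zero, zero_add]
    rw [e11, e12, e21, e22]
  have hQsymm : Qᵀ = Q := by
    rw [hQdef, hE1def, hE2def, Matrix.fromBlocks_transpose]
    simp [Matrix.transpose_sub, Matrix.transpose_mul, Matrix.transpose_neg,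
      hP1symm, hP2symm, hD1symm, hD2symm, Matrix.mul_assoc]
  have hTT : Tᵀ + T = -(Lᵀ * L) := by
    rw [hTdef, hLdef, Matrix.fromBlocks_transpose, Matrix.fromBlocks_transpose,
      Matrix.fromBlocks_multiply, Matrix.fromBlocks_add]
    simp only [Matrix.transpose_zero, Matrix.mul_zero, Matrix.zero_mul,
      add_zero, zero_add]
    rw [Matrix.fromBlocks_neg, add_comm T1ᵀ, add_comm T2ᵀ, hL1, hL2]; simp only [neg_zero]
  have hR1 : Matrix.fromCols (L1 * E1) (-(L1 * C1ᵀ * C2))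
      = Matrix.fromCols (L1 * E1 + (0 : Matrix (Fin l1) (Fin n2) ℝ) * (-(C2ᵀ * C1)))
        (L1 * (-(C1ᵀ * C2)) + (0 : Matrix (Fin l1) (Fin n2) ℝ) * E2) := by
    congr 1 <;> simp only [Matrix.zero_mul, Matrix.mul_zero, add_zero, zero_add, Matrix.neg_mul, Matrix.mul_neg, Matrix.mul_sub, Matrix.sub_mul, Matrix.mul_assoc, sub_eq_add_neg, Matrix.mul_add, neg_zero, add_zero, zero_add]
  have hR2 : Matrix.fromCols (-(L2 * C2ᵀ * C1)) (L2 * E2)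
      = Matrix.fromCols ((0 : Matrix (Fin l2) (Fin n1) ℝ) * E1 + L2 * (-(C2ᵀ * C1)))
        ((0 : Matrix (Fin l2) (Fin n1) ℝ) * (-(C1ᵀ * C2)) + L2 * E2) := by
    congr 1 <;> simp only [Matrix.zero_mul, Matrix.mul_zero, add_zero, zero_add, Matrix.neg_mul, Matrix.mul_neg, Matrix.mul_sub, Matrix.sub_mul, Matrix.mul_assoc, sub_eq_add_neg, Matrix.mul_add, neg_zero, add_zero, zero_add]
  have hRHS : (Matrix.fromCols (L1 * E1) (-(L1 * C1ᵀ * C2)))ᵀ *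
        (Matrix.fromCols (L1 * E1) (-(L1 * C1ᵀ * C2))) +
      (Matrix.fromCols (-(L2 * C2ᵀ * C1)) (L2 * E2))ᵀ *
        (Matrix.fromCols (-(L2 * C2ᵀ * C1)) (L2 * E2))
      = (L * Q)ᵀ * (L * Q) := by
    have hLQ : L * Q = Matrix.fromRows
        (Matrix.fromCols (L1 * E1) (-(L1 * C1ᵀ * C2)))
        (Matrix.fromCols (-(L2 * C2ᵀ * C1)) (L2 * E2)) := by
      rw [hLdef, hQdef, Matrix.fromBlocks_multiply,
        ← Matrix.fromRows_fromCols_eq_fromBlocks, hR1, hR2]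
    rw [hLQ, Matrix.transpose_fromRows, Matrix.fromCols_mul_fromRows]
  have key : (T * Q)ᵀ * Q + Q * (T * Q) = -((L * Q)ᵀ * (L * Q)) := by
    rw [Matrix.transpose_mul, hQsymm]
    calc Q * Tᵀ * Q + Q * (T * Q) = Q * (Tᵀ + T) * Q := by noncomm_ring
    _ = Q * (-(Lᵀ * L)) * Q := by rw [hTT]
    _ = -((L * Q)ᵀ * (L * Q)) := by
        simp only [Matrix.mul_neg, Matrix.neg_mul, Matrix.transpose_mul, hQsymm,
          Matrix.mul_assoc]
  have main : (Matrix.fromBlocks (A1 + B1 * D2 * C1) (B1 * C2)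
        (B2 * C1) (A2 + B2 * D1 * C2))ᵀ * Q +
      Q * (Matrix.fromBlocks (A1 + B1 * D2 * C1) (B1 * C2)
        (B2 * C1) (A2 + B2 * D1 * C2)) =
      -((Matrix.fromCols (L1 * E1) (-(L1 * C1ᵀ * C2)))ᵀ *
          (Matrix.fromCols (L1 * E1) (-(L1 * C1ᵀ * C2))) +
        (Matrix.fromCols (-(L2 * C2ᵀ * C1)) (L2 * E2))ᵀ *
          (Matrix.fromCols (-(L2 * C2ᵀ * C1)) (L2 * E2))) := by
    rw [hAhat, hRHS, key]
  refine ⟨main, fun x => ?_⟩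
  rw [main]
  have sq : ∀ {k : ℕ} (M : Matrix (Fin k) (Fin n1 ⊕ Fin n2) ℝ),
      0 ≤ x ⬝ᵥ (Mᵀ * M).mulVec x := by
    intro k M
    rw [← Matrix.mulVec_mulVec, Matrix.dotProduct_mulVec, Matrix.vecMul_transpose]
    exact Finset.sum_nonneg fun i _ => mul_self_nonneg _
  rw [Matrix.neg_mulVec, dotProduct_neg, Matrix.add_mulVec, dotProduct_add]
  have h1 := sq (Matrix.fromCols (L1 * E1) (-(L1 * C1ᵀ * C2)))
  have h2 := sq (Matrix.fromCols (-(L2 * C2ᵀ * C1)) (L2 * E2))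
  linarith
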